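/- arXiv:1507.00228 — 3 statements merged into one kernel-verified Lean document; each statement's English description precedes it below -/
import Mathlib

section
/- Let (X_poi, X_dir) be an irredundant solution of the polyhedral projection problem computing the upper image 𝒫 of a feasible VLP with L ∩ C = {0}. Then for every (x,y) ∈ X_dir with y ∉ L + C\{0}, the direction x is a minimizer of the VLP, i.e., y ∉ 0⁺𝒫 + C\{0}; consequently S_poi = {x : (x,y) ∈ X_poi} together with S_dir = {x : (x,y) ∈ X_dir, y ∉ L + C\{0}} forms a solution of the VLP. -/
open Pointwise Set

/-- `cone B = {λ x : λ ≥ 0, x ∈ conv B}`, with `cone ∅ = {0}`. -/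
def coneOf {q : ℕ} (B : Set (Fin q → ℝ)) : Set (Fin q → ℝ) :=
  insert 0 {x | ∃ l : ℝ, 0 ≤ l ∧ ∃ b ∈ convexHull ℝ B, x = l • b}

/-- recession cone `0⁺P = {d : P + d ⊆ P}` -/
def recCone {q : ℕ} (P : Set (Fin q → ℝ)) : Set (Fin q → ℝ) :=
  {d | ∀ y ∈ P, y + d ∈ P}

section AuxLemmas

variable {q : ℕ} {B B' : Set (Fin q → ℝ)}

lemma zero_mem_coneOf : (0 : Fin q → ℝ) ∈ coneOf B := Or.inl rfl

lemma coneOf_mono (h : B ⊆ B') : coneOf B ⊆ coneOf B' := by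
  rintro x (rfl | ⟨l, hl, b, hb, rfl⟩)
  · exact zero_mem_coneOf
  · exact Or.inr ⟨l, hl, b, convexHull_mono h hb, rfl⟩

lemma subset_coneOf : B ⊆ coneOf B := fun b hb =>
  Or.inr ⟨1, zero_le_one, b, subset_convexHull ℝ B hb, (one_smul ℝ b).symm⟩

lemma smul_mem_coneOf {c : ℝ} {x : Fin q → ℝ} (hc : 0 ≤ c) (hx : x ∈ coneOf B) :
    c • x ∈ coneOf B := by
  rcases hx with rfl | ⟨l, hl, b, hb, rfl⟩
  · simpa using zero_mem_coneOf
  · exact Or.inr ⟨c * l, mul_nonneg hc hl, b, hb, smul_smul c l b⟩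

lemma add_mem_coneOf {x y : Fin q → ℝ} (hx : x ∈ coneOf B) (hy : y ∈ coneOf B) :
    x + y ∈ coneOf B := by
  rcases hx with rfl | ⟨l, hl, b, hb, rfl⟩
  · simpa using hy
  rcases hy with rfl | ⟨l', hl', b', hb', rfl⟩
  · rw [add_zero]; exact Or.inr ⟨l, hl, b, hb, rfl⟩
  rcases eq_or_lt_of_le (add_nonneg hl hl' : (0:ℝ) ≤ l + l') with h0 | hpos
  · have hl0 : l = 0 := by linarith [(by nlinarith : l ≤ 0)]
    have hl'0 : l' = 0 := by linarith
    simp [hl0, hl'0, zero_mem_coneOf]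
  · refine Or.inr ⟨l + l', le_of_lt hpos, (l/(l+l')) • b + (l'/(l+l')) • b', ?_, ?_⟩
    · refine (convex_convexHull ℝ B) hb hb' (by positivity) (by positivity) ?_
      field_simp
    · rw [smul_add, smul_smul, smul_smul]
      congr 2 <;> field_simp

lemma sum_mem_coneOf {ι : Type*} {s : Finset ι} {w : ι → ℝ} {v : ι → Fin q → ℝ}
    (hw : ∀ i ∈ s, 0 ≤ w i) (hv : ∀ i ∈ s, v i ∈ B) :
    ∑ i ∈ s, w i • v i ∈ coneOf B := by
  classical
  induction s using Finset.induction with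
  | empty => simpa using (zero_mem_coneOf : (0:Fin q → ℝ) ∈ coneOf B)
  | insert _ _ hnot ih =>
    rename_i a s
    rw [Finset.sum_insert hnot]
    exact add_mem_coneOf
      (smul_mem_coneOf (hw a (Finset.mem_insert_self a s)) (subset_coneOf (hv a (Finset.mem_insert_self a s))))
      (ih (fun i hi => hw i (Finset.mem_insert_of_mem hi)) (fun i hi => hv i (Finset.mem_insert_of_mem hi)))

lemma mem_coneOf_finset {s : Finset (Fin q → ℝ)} {x : Fin q → ℝ} :
    x ∈ coneOf ↑s ↔ ∃ w : (Fin q → ℝ) → ℝ, (∀ i ∈ s, 0 ≤ w i) ∧ x = ∑ i ∈ s, w i • i := by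
  constructor
  · rintro (rfl | ⟨l, hl, b, hb, rfl⟩)
    · exact ⟨fun _ => 0, fun i _ => le_refl 0, by simp⟩
    · rw [Finset.convexHull_eq] at hb
      obtain ⟨w, hw, hw1, hwx⟩ := hb
      refine ⟨fun i => l * w i, fun i hi => mul_nonneg hl (hw i hi), ?_⟩
      have := hwx
      rw [Finset.centerMass_eq_of_sum_1 _ _ hw1] at this
      subst this
      rw [Finset.smul_sum]
      exact Finset.sum_congr rfl fun i _ => by rw [smul_smul]; rfl
  · rintro ⟨w, hw, rfl⟩
    exact sum_mem_coneOf hw (fun i hi => by exact_mod_cast hi)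

lemma coneOf_subset_self {M : Set (Fin q → ℝ)} (hconv : Convex ℝ M) (h0 : (0:Fin q → ℝ) ∈ M)
    (hsmul : ∀ c : ℝ, 0 ≤ c → ∀ x ∈ M, c • x ∈ M) : coneOf M ⊆ M := by
  rintro x (rfl | ⟨l, hl, b, hb, rfl⟩)
  · exact h0
  · exact hsmul l hl b (by rwa [hconv.convexHull_eq] at hb)

lemma convex_coneOf : Convex ℝ (coneOf B) := by
  intro x hx y hy a b ha hb _
  exact add_mem_coneOf (smul_mem_coneOf ha hx) (smul_mem_coneOf hb hy)


-- conv A ⊆ conv A' + C when A ⊆ A' + C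
lemma convexHull_subset_add {A A' Cc : Set (Fin q → ℝ)} (h : A ⊆ A' + Cc) (hCc : Convex ℝ Cc) :
    convexHull ℝ A ⊆ convexHull ℝ A' + Cc := by
  have h1 : convexHull ℝ A ⊆ convexHull ℝ (A' + Cc) := convexHull_mono h
  rw [convexHull_add, hCc.convexHull_eq] at h1
  exact h1

lemma coneOf_subset_add {A A' Cc : Set (Fin q → ℝ)} (h : A ⊆ A' + Cc) (hCc : Convex ℝ Cc)
    (h0 : (0:Fin q → ℝ) ∈ Cc) (hsmul : ∀ c : ℝ, 0 ≤ c → ∀ x ∈ Cc, c • x ∈ Cc) :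
    coneOf A ⊆ coneOf A' + Cc := by
  rintro x (rfl | ⟨l, hl, b, hb, rfl⟩)
  · exact ⟨0, zero_mem_coneOf, 0, h0, by simp⟩
  · obtain ⟨p, hp, c, hc, rfl⟩ := mem_add.mp (convexHull_subset_add h hCc hb)
    exact ⟨l • p, Or.inr ⟨l, hl, p, hp, rfl⟩, l • c, hsmul l hl c hc, by simp [smul_add]⟩

-- splitting a cone element at a chosen generator y
lemma coneOf_split {s : Finset (Fin q → ℝ)} {x : Fin q → ℝ} (y : Fin q → ℝ)
    (hx : x ∈ coneOf ↑s) :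
    ∃ l : ℝ, 0 ≤ l ∧ ∃ x' ∈ coneOf ((↑s : Set (Fin q → ℝ)) \ {y}), x = l • y + x' := by
  classical
  obtain ⟨w, hw, rfl⟩ := mem_coneOf_finset.mp hx
  by_cases hy : y ∈ s
  · refine ⟨w y, hw y hy, ∑ i ∈ s.erase y, w i • i, ?_, ?_⟩
    · exact sum_mem_coneOf (fun i hi => hw i (Finset.mem_of_mem_erase hi))
        (fun i hi => ⟨Finset.mem_coe.mpr (Finset.mem_of_mem_erase hi), Finset.ne_of_mem_erase hi⟩)
    · rw [Finset.add_sum_erase s (fun i => w i • i) hy]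
  · refine ⟨0, le_refl 0, ∑ i ∈ s, w i • i, ?_, by simp⟩
    exact sum_mem_coneOf hw (fun i hi => ⟨Finset.mem_coe.mpr hi, fun h => hy (h ▸ hi)⟩)

-- splitting a convex hull element at a chosen point y
lemma convexHull_split {s : Finset (Fin q → ℝ)} {p : Fin q → ℝ} (y : Fin q → ℝ)
    (hp : p ∈ convexHull ℝ (↑s : Set (Fin q → ℝ))) :
    p = y ∨ ∃ t : ℝ, 0 ≤ t ∧ t < 1 ∧ ∃ p' ∈ convexHull ℝ ((↑s : Set (Fin q → ℝ)) \ {y}),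
      p = t • y + (1 - t) • p' := by
  classical
  rw [Finset.convexHull_eq] at hp
  obtain ⟨w, hw, hw1, hwp⟩ := hp
  rw [Finset.centerMass_eq_of_sum_1 _ _ hw1] at hwp
  simp only [id_eq] at hwp
  by_cases hy : y ∈ s
  · set t := w y with ht
    by_cases ht1 : t = 1
    · left
      -- all other weights are 0
      have hrest : ∑ i ∈ s.erase y, w i = 0 := by
        have := Finset.add_sum_erase s w hy
        rw [hw1] at this; linarith [this]
      have hz : ∀ i ∈ s.erase y, w i • i = (0 : Fin q → ℝ) := by
        intro i hi
        have : w i = 0 := by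
          have hnn : ∀ j ∈ s.erase y, 0 ≤ w j := fun j hj => hw j (Finset.mem_of_mem_erase hj)
          exact (Finset.sum_eq_zero_iff_of_nonneg hnn).mp hrest i hi
        simp [this]
      rw [← hwp, ← Finset.add_sum_erase s (fun i => w i • i) hy, Finset.sum_eq_zero hz]
      simp [← ht, ht1]
    · right
      have ht0 : 0 ≤ t := hw y hy
      have htlt : t < 1 := lt_of_le_of_ne (by
        by_contra h
        push_neg at h
        have : ∑ i ∈ s.erase y, w i = 1 - t := by
          have := Finset.add_sum_erase s w hy; rw [hw1] at this; linarith
        have hnn : 0 ≤ ∑ i ∈ s.erase y, w i :=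
          Finset.sum_nonneg fun j hj => hw j (Finset.mem_of_mem_erase hj)
        linarith) ht1
      have h1t : (0:ℝ) < 1 - t := by linarith
      refine ⟨t, ht0, htlt, (1-t)⁻¹ • ∑ i ∈ s.erase y, w i • i, ?_, ?_⟩
      · -- convex combination with weights w i / (1-t)
        have hsub : (↑(s.erase y) : Set (Fin q → ℝ)) ⊆ (↑s : Set (Fin q → ℝ)) \ {y} := by
          intro i hi
          exact ⟨Finset.mem_coe.mpr (Finset.mem_of_mem_erase (Finset.mem_coe.mp hi)),
            Finset.ne_of_mem_erase (Finset.mem_coe.mp hi)⟩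
        refine convexHull_mono hsub ?_
        rw [Finset.convexHull_eq]
        refine ⟨fun i => (1-t)⁻¹ * w i, fun i hi => mul_nonneg (by positivity)
          (hw i (Finset.mem_of_mem_erase hi)), ?_, ?_⟩
        · rw [← Finset.mul_sum]
          have : ∑ i ∈ s.erase y, w i = 1 - t := by
            have := Finset.add_sum_erase s w hy; rw [hw1] at this; linarith
          rw [this]; field_simp
        · rw [Finset.centerMass_eq_of_sum_1]
          · rw [Finset.smul_sum]
            exact Finset.sum_congr rfl fun i _ => by rw [smul_smul]; rfl
          · rw [← Finset.mul_sum]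
            have : ∑ i ∈ s.erase y, w i = 1 - t := by
              have := Finset.add_sum_erase s w hy; rw [hw1] at this; linarith
            rw [this]; field_simp
      · rw [smul_smul, mul_inv_cancel₀ (ne_of_gt h1t), one_smul,
          ← hwp, ← Finset.add_sum_erase s (fun i => w i • i) hy]
  · right
    refine ⟨0, le_refl 0, zero_lt_one, p, ?_, by simp⟩
    rw [← hwp]
    have hsub : (↑s : Set (Fin q → ℝ)) ⊆ (↑s : Set (Fin q → ℝ)) \ {y} := by
      intro i hi
      refine ⟨hi, fun h => hy ?_⟩
      rw [Set.mem_singleton_iff] at h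
      rw [h] at hi
      exact Finset.mem_coe.mp hi
    refine convexHull_mono hsub ?_
    rw [Finset.convexHull_eq]
    exact ⟨w, hw, hw1, by rw [Finset.centerMass_eq_of_sum_1 _ _ hw1]; simp [hwp]⟩

-- recCone lemmas
lemma zero_mem_recCone {Pp : Set (Fin q → ℝ)} : (0 : Fin q → ℝ) ∈ recCone Pp :=
  fun y hy => by simpa using hy

lemma add_mem_recCone {Pp : Set (Fin q → ℝ)} {a b : Fin q → ℝ}
    (ha : a ∈ recCone Pp) (hb : b ∈ recCone Pp) : a + b ∈ recCone Pp :=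
  fun y hy => by rw [← add_assoc]; exact hb _ (ha _ hy)

lemma nsmul_mem_recCone {Pp : Set (Fin q → ℝ)} {d : Fin q → ℝ} (hd : d ∈ recCone Pp) :
    ∀ n : ℕ, (n : ℝ) • d ∈ recCone Pp := by
  intro n
  induction n with
  | zero => simpa using (zero_mem_recCone : (0:Fin q → ℝ) ∈ recCone Pp)
  | succ k ih =>
    have : ((k+1 : ℕ) : ℝ) • d = (k:ℝ) • d + d := by push_cast; rw [add_smul, one_smul]
    rw [this]
    exact add_mem_recCone ih hd

lemma smul_mem_recCone {Pp : Set (Fin q → ℝ)} (hconv : Convex ℝ Pp) {c : ℝ} {d : Fin q → ℝ}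
    (hc : 0 ≤ c) (hd : d ∈ recCone Pp) : c • d ∈ recCone Pp := by
  intro y hy
  rcases eq_or_lt_of_le hc with rfl | hcpos
  · simpa using hy
  obtain ⟨nn, hn⟩ := exists_nat_gt c
  have hnpos : (0:ℝ) < nn := lt_trans hcpos hn
  have hyn : y + (nn:ℝ) • d ∈ Pp := nsmul_mem_recCone hd nn y hy
  have key : y + c • d = (1 - c / nn) • y + (c / nn) • (y + (nn:ℝ) • d) := by
    rw [smul_add, smul_smul]
    rw [div_mul_cancel₀ c (ne_of_gt hnpos)]
    module
  rw [key]
  exact hconv hy hyn (by rw [sub_nonneg, div_le_one hnpos]; exact le_of_lt hn) (by positivity) (by ring)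


-- Carathéodory for cones
lemma cone_caratheodory :
    ∀ (N : ℕ) (s : Finset (Fin q → ℝ)), s.card ≤ N →
    ∀ x ∈ coneOf (↑s : Set (Fin q → ℝ)),
    ∃ t : Finset (Fin q → ℝ), t ⊆ s ∧
      LinearIndependent ℝ ((↑) : (↑t : Set (Fin q → ℝ)) → (Fin q → ℝ)) ∧
      x ∈ coneOf (↑t : Set (Fin q → ℝ)) := by
  classical
  intro N
  induction N with
  | zero =>
    intro s hs x hx
    have : s = ∅ := Finset.card_eq_zero.mp (Nat.le_zero.mp hs)
    subst this
    refine ⟨∅, Finset.Subset.refl _, ?_, hx⟩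
    rw [Finset.coe_empty]
    exact linearIndependent_empty ℝ (Fin q → ℝ)
  | succ N ih =>
    intro s hs x hx
    by_cases hli : LinearIndependent ℝ ((↑) : (↑s : Set (Fin q → ℝ)) → (Fin q → ℝ))
    · exact ⟨s, Finset.Subset.refl _, hli, hx⟩
    · -- get a dependence relation
      have hli' : ¬ LinearIndependent ℝ (fun i : {x // x ∈ s} => (i : Fin q → ℝ)) := hli
      obtain ⟨g₀, hg₀0, i₀', hgi₀'⟩ := Fintype.not_linearIndependent_iff.mp hli'
      have hexists : ∃ g : {x // x ∈ s} → ℝ, (∑ i : {x // x ∈ s}, g i • (i : Fin q → ℝ)) = 0 ∧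
          ∃ i, 0 < g i := by
        rcases lt_or_gt_of_ne hgi₀' with h | h
        · refine ⟨-g₀, ?_, i₀', by simpa using h⟩
          simp only [Pi.neg_apply, neg_smul, Finset.sum_neg_distrib, hg₀0, neg_zero]
        · exact ⟨g₀, hg₀0, i₀', h⟩
      obtain ⟨g, hg0, i₀, hgi₀⟩ := hexists
      set G : (Fin q → ℝ) → ℝ := fun v => if h : v ∈ s then g ⟨v, h⟩ else 0 with hG
      have hGsum : ∑ i ∈ s, G i • i = 0 := by
        rw [← Finset.sum_coe_sort s (fun v => G v • v)]
        calc ∑ i : {x // x ∈ s}, (G ↑i) • (i : Fin q → ℝ)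
            = ∑ i : {x // x ∈ s}, g i • (i : Fin q → ℝ) := by
              apply Finset.sum_congr rfl; intro i _
              simp only [hG, dif_pos i.2]
          _ = 0 := hg0
      have hGpos : ∃ i ∈ s, 0 < G i := by
        refine ⟨i₀, i₀.2, ?_⟩
        show 0 < G ↑i₀
        simp only [hG, dif_pos i₀.2]
        exact hgi₀
      -- now do the reduction
      obtain ⟨w, hw, rfl⟩ := mem_coneOf_finset.mp hx
      obtain ⟨j₀, hj₀s, hj₀min⟩ := Finset.exists_min_image (s.filter (fun i => 0 < G i))
        (fun i => w i / G i) (by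
          obtain ⟨i, hi, hGi⟩ := hGpos
          exact ⟨i, Finset.mem_filter.mpr ⟨hi, hGi⟩⟩)
      have hj₀ : j₀ ∈ s := (Finset.mem_filter.mp hj₀s).1
      have hGj₀ : 0 < G j₀ := (Finset.mem_filter.mp hj₀s).2
      set r := w j₀ / G j₀ with hr
      have hr0 : 0 ≤ r := div_nonneg (hw j₀ hj₀) (le_of_lt hGj₀)
      set w' : (Fin q → ℝ) → ℝ := fun i => w i - r * G i with hw'
      have hw'nonneg : ∀ i ∈ s, 0 ≤ w' i := by
        intro i hi
        by_cases hGi : 0 < G i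
        · have h1 : r ≤ w i / G i := hj₀min i (Finset.mem_filter.mpr ⟨hi, hGi⟩)
          have h2 : r * G i ≤ w i := (le_div_iff₀ hGi).mp h1
          simp only [hw']; linarith
        · have : r * G i ≤ 0 := mul_nonpos_of_nonneg_of_nonpos hr0 (le_of_not_gt hGi)
          have := hw i hi
          simp only [hw']; linarith
      have hw'j₀ : w' j₀ = 0 := by
        simp only [hw', hr]
        field_simp
        ring
      have hsum' : ∑ i ∈ s, w i • i = ∑ i ∈ s.erase j₀, w' i • i := by
        rw [Finset.sum_erase _ (by rw [hw'j₀]; simp)]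
        have : ∑ i ∈ s, w' i • i = ∑ i ∈ s, (w i • i - (r * G i) • i) := by
          apply Finset.sum_congr rfl; intro i _; rw [hw']; rw [sub_smul]
        rw [this, Finset.sum_sub_distrib]
        have : ∑ i ∈ s, (r * G i) • i = r • ∑ i ∈ s, G i • i := by
          rw [Finset.smul_sum]
          apply Finset.sum_congr rfl; intro i _; rw [smul_smul]
        rw [this, hGsum, smul_zero, sub_zero]
      rw [hsum']
      have hcard : (s.erase j₀).card ≤ N := by
        have := Finset.card_erase_of_mem hj₀
        omega
      have hmem : ∑ i ∈ s.erase j₀, w' i • i ∈ coneOf (↑(s.erase j₀) : Set (Fin q → ℝ)) :=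
        sum_mem_coneOf (fun i hi => hw'nonneg i (Finset.mem_of_mem_erase hi))
          (fun i hi => Finset.mem_coe.mpr hi)
      obtain ⟨t, hts, hli2, hmem2⟩ := ih (s.erase j₀) hcard _ hmem
      exact ⟨t, hts.trans (Finset.erase_subset _ _), hli2, hmem2⟩


lemma coneOf_linIndep_isClosed (t : Finset (Fin q → ℝ))
    (h : LinearIndependent ℝ ((↑) : (↑t : Set (Fin q → ℝ)) → (Fin q → ℝ))) :
    IsClosed (coneOf (↑t : Set (Fin q → ℝ))) := by
  classical
  set f : ({x // x ∈ t} → ℝ) →ₗ[ℝ] (Fin q → ℝ) :=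
    { toFun := fun w => ∑ i : {x // x ∈ t}, w i • (i : Fin q → ℝ)
      map_add' := by
        intro a b
        simp only [Pi.add_apply, add_smul, Finset.sum_add_distrib]
      map_smul' := by
        intro c a
        simp only [Pi.smul_apply, smul_eq_mul, RingHom.id_apply, Finset.smul_sum, smul_smul] } with hf
  have hinj : LinearMap.ker f = ⊥ := by
    rw [LinearMap.ker_eq_bot']
    intro w hw
    have h' : LinearIndependent ℝ (fun i : {x // x ∈ t} => (i : Fin q → ℝ)) := h
    exact funext (Fintype.linearIndependent_iff.mp h' w hw)
  have hemb := LinearMap.isClosedEmbedding_of_injective hinj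
  have hclosedset : IsClosed {w : {x // x ∈ t} → ℝ | ∀ i, 0 ≤ w i} := by
    have : {w : {x // x ∈ t} → ℝ | ∀ i, 0 ≤ w i} = ⋂ i, {w | 0 ≤ w i} := by
      ext w; simp
    rw [this]
    exact isClosed_iInter fun i => isClosed_le continuous_const (continuous_apply i)
  have himg : coneOf (↑t : Set (Fin q → ℝ)) = f '' {w | ∀ i, 0 ≤ w i} := by
    ext x
    constructor
    · intro hx
      obtain ⟨w, hw, rfl⟩ := mem_coneOf_finset.mp hx
      refine ⟨fun i => w i, fun i => hw i i.2, ?_⟩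
      show ∑ i : {x // x ∈ t}, w ↑i • (i : Fin q → ℝ) = _
      rw [Finset.sum_coe_sort t (fun v => w v • v)]
    · rintro ⟨w, hw, rfl⟩
      show (∑ i : {x // x ∈ t}, w i • (i : Fin q → ℝ)) ∈ _
      exact sum_mem_coneOf (s := Finset.univ) (fun i _ => hw i) (fun i _ => i.2)
  rw [himg]
  exact (hemb.isClosedMap) _ hclosedset

lemma coneOf_finset_isClosed (s : Finset (Fin q → ℝ)) :
    IsClosed (coneOf (↑s : Set (Fin q → ℝ))) := by
  classical
  have hun : coneOf (↑s : Set (Fin q → ℝ)) =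
      ⋃ t ∈ {T : Finset (Fin q → ℝ) | T ⊆ s ∧
        LinearIndependent ℝ ((↑) : (↑T : Set (Fin q → ℝ)) → (Fin q → ℝ))},
        coneOf (↑t : Set (Fin q → ℝ)) := by
    ext x
    constructor
    · intro hx
      obtain ⟨t, hts, hli, hmem⟩ := cone_caratheodory s.card s le_rfl x hx
      exact Set.mem_biUnion ⟨hts, hli⟩ hmem
    · intro hx
      obtain ⟨t, ht, hmem⟩ := Set.mem_iUnion₂.mp hx
      exact coneOf_mono (by exact_mod_cast ht.1) hmem
  rw [hun]
  apply Set.Finite.isClosed_biUnion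
  · exact (s.powerset.finite_toSet).subset (fun T hT => Finset.mem_coe.mpr
      (Finset.mem_powerset.mpr hT.1))
  · intro t ht
    exact coneOf_linIndep_isClosed t ht.2


/-- the recession cone of `conv Q + coneOf D` is contained in `coneOf D`
(for finite `Q`, `D`, `Q` nonempty). -/
lemma recCone_subset_coneOf {Q : Set (Fin q → ℝ)} {s : Finset (Fin q → ℝ)}
    {UI : Set (Fin q → ℝ)} (hQfin : Q.Finite) (hQne : Q.Nonempty)
    (hUI : UI = convexHull ℝ Q + coneOf (↑s : Set (Fin q → ℝ))) :
    recCone UI ⊆ coneOf (↑s : Set (Fin q → ℝ)) := by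
  intro d hd
  obtain ⟨y₀, hy₀Q⟩ := hQne
  have hy₀ : y₀ ∈ UI := by
    rw [hUI]
    exact ⟨y₀, subset_convexHull ℝ Q hy₀Q, 0, zero_mem_coneOf, add_zero y₀⟩
  -- y₀ + (n+1) • d ∈ UI
  have hseq : ∀ n : ℕ, y₀ + ((n:ℝ) + 1) • d ∈ UI := by
    intro n
    induction n with
    | zero => simpa using hd y₀ hy₀
    | succ k ih =>
      have h0 := hd _ ih
      have heq : y₀ + ((k:ℝ) + 1) • d + d = y₀ + ((((k+1):ℕ):ℝ) + 1) • d := by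
        push_cast
        rw [show ((k:ℝ) + 1 + 1) • d = ((k:ℝ)+1) • d + (1:ℝ) • d by rw [← add_smul],
          one_smul]
        abel
      rwa [heq] at h0
  -- choose decompositions
  have hdecomp : ∀ n : ℕ, ∃ p ∈ convexHull ℝ Q, ∃ k ∈ coneOf (↑s : Set (Fin q → ℝ)),
      y₀ + ((n:ℝ) + 1) • d = p + k := by
    intro n
    have := hseq n
    rw [hUI] at this
    obtain ⟨p, hp, k, hk, hpk⟩ := this
    exact ⟨p, hp, k, hk, hpk.symm⟩
  choose p hp k hk hpk using hdecomp
  -- bound on conv Q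
  obtain ⟨M, hM⟩ := (hQfin.isCompact_convexHull ℝ).isBounded.exists_norm_le
  -- u n := (1/(n+1)) • k n  tends to d
  set u : ℕ → (Fin q → ℝ) := fun n => ((n:ℝ) + 1)⁻¹ • k n with hu
  have humem : ∀ n, u n ∈ coneOf (↑s : Set (Fin q → ℝ)) := fun n =>
    smul_mem_coneOf (by positivity) (hk n)
  have hue : ∀ n, u n = d + ((n:ℝ)+1)⁻¹ • (y₀ - p n) := by
    intro n
    have h1 : k n = y₀ + ((n:ℝ) + 1) • d - p n := by
      have := hpk n; rw [this]; abel
    rw [hu]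
    simp only
    rw [h1]
    have hne : ((n:ℝ)+1) ≠ 0 := by positivity
    rw [show y₀ + ((n:ℝ) + 1) • d - p n = ((n:ℝ)+1) • d + (y₀ - p n) by abel,
      smul_add, smul_smul, inv_mul_cancel₀ hne, one_smul]
  have htend : Filter.Tendsto u Filter.atTop (nhds d) := by
    have hnorm : ∀ n : ℕ, ‖u n - d‖ ≤ (‖y₀‖ + M) / ((n:ℝ)+1) := by
      intro n
      rw [hue n]
      have : d + ((n:ℝ)+1)⁻¹ • (y₀ - p n) - d = ((n:ℝ)+1)⁻¹ • (y₀ - p n) := by abel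
      rw [this, norm_smul]
      have h1 : ‖y₀ - p n‖ ≤ ‖y₀‖ + M :=
        le_trans (norm_sub_le _ _) (by linarith [hM (p n) (hp n)])
      have h2 : ‖(((n:ℝ)+1)⁻¹ : ℝ)‖ = ((n:ℝ)+1)⁻¹ := by
        rw [Real.norm_eq_abs, abs_of_pos (by positivity)]
      rw [h2, div_eq_inv_mul]
      exact mul_le_mul_of_nonneg_left h1 (by positivity)
    have hlim : Filter.Tendsto (fun n : ℕ => (‖y₀‖ + M) / ((n:ℝ)+1)) Filter.atTop (nhds 0) := by
      have := tendsto_const_div_atTop_nhds_zero_nat (‖y₀‖ + M)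
      have hcomp := this.comp (Filter.tendsto_add_atTop_nat 1)
      have : ((fun n : ℕ => (‖y₀‖ + M) / (n:ℝ)) ∘ fun a => a + 1) =
          fun n : ℕ => (‖y₀‖ + M) / ((n:ℝ)+1) := by
        funext n
        simp only [Function.comp_apply]
        push_cast
        ring_nf
      rwa [this] at hcomp
    have : Filter.Tendsto (fun n => u n - d) Filter.atTop (nhds 0) :=
      squeeze_zero_norm hnorm hlim
    have := this.add_const d
    simpa using this
  exact (coneOf_finset_isClosed s).mem_of_tendsto htend (Filter.Eventually.of_forall humem)

end AuxLemmas

/-- `(Xpoi, Xdir)` is a solution of the polyhedral projection problem associated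
to the VLP `min Px s.t. Ax ≥ b` with ordering cone `{y : Zᵀy ≥ 0}`, computing
the upper image `UI`. -/
def IsPPSolution {m n q r : ℕ} (A : Matrix (Fin m) (Fin n) ℝ) (b : Fin m → ℝ)
    (P : Matrix (Fin q) (Fin n) ℝ) (Z : Matrix (Fin q) (Fin r) ℝ)
    (UI : Set (Fin q → ℝ))
    (Xpoi Xdir : Set ((Fin n → ℝ) × (Fin q → ℝ))) : Prop :=
  Xpoi.Finite ∧ Xdir.Finite ∧ Xpoi.Nonempty ∧
  (∀ s ∈ Xpoi, (∀ i, b i ≤ A.mulVec s.1 i) ∧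
    (∀ j, Z.transpose.mulVec (P.mulVec s.1) j ≤ Z.transpose.mulVec s.2 j)) ∧
  (∀ s ∈ Xdir, s ≠ 0 ∧ (∀ i, (0:ℝ) ≤ A.mulVec s.1 i) ∧
    (∀ j, Z.transpose.mulVec (P.mulVec s.1) j ≤ Z.transpose.mulVec s.2 j)) ∧
  UI = convexHull ℝ (Prod.snd '' Xpoi) + coneOf (Prod.snd '' Xdir)

/-- An irredundant solution: no proper sub-pair is also a solution. -/
def IsIrredundantPPSolution {m n q r : ℕ} (A : Matrix (Fin m) (Fin n) ℝ)
    (b : Fin m → ℝ) (P : Matrix (Fin q) (Fin n) ℝ) (Z : Matrix (Fin q) (Fin r) ℝ)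
    (UI : Set (Fin q → ℝ))
    (Xpoi Xdir : Set ((Fin n → ℝ) × (Fin q → ℝ))) : Prop :=
  IsPPSolution A b P Z UI Xpoi Xdir ∧
  ∀ Vpoi Vdir, Vpoi ⊆ Xpoi → Vdir ⊆ Xdir →
    IsPPSolution A b P Z UI Vpoi Vdir → Vpoi = Xpoi ∧ Vdir = Xdir
/-- `(Spoi, Sdir)` is a solution of the VLP `min Px s.t. Ax ≥ b` w.r.t. the
ordering cone `C`: a finite infimizer consisting only of minimizers. -/
def IsVLPSolution {m n q : ℕ} (A : Matrix (Fin m) (Fin n) ℝ) (b : Fin m → ℝ)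
    (P : Matrix (Fin q) (Fin n) ℝ) (C : Set (Fin q → ℝ))
    (Spoi Sdir : Set (Fin n → ℝ)) : Prop :=
  Spoi.Finite ∧ Sdir.Finite ∧ Spoi.Nonempty ∧
  -- feasibility
  (∀ x ∈ Spoi, ∀ i, b i ≤ A.mulVec x i) ∧
  (∀ x ∈ Sdir, x ≠ 0 ∧ ∀ i, (0:ℝ) ≤ A.mulVec x i) ∧
  -- minimizers
  (∀ x ∈ Spoi,
    P.mulVec x ∉ (P.mulVec '' {z | ∀ i, b i ≤ A.mulVec z i}) + (C \ {0})) ∧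
  (∀ x ∈ Sdir,
    P.mulVec x ∉ (P.mulVec '' {z | ∀ i, (0:ℝ) ≤ A.mulVec z i}) + (C \ {0})) ∧
  -- finite infimizer
  convexHull ℝ (P.mulVec '' Spoi) + coneOf (P.mulVec '' Sdir) + C =
    (P.mulVec '' {z | ∀ i, b i ≤ A.mulVec z i}) + C

theorem irredundant_solution_yields_vlp_solution
    (m n q r : ℕ) (A : Matrix (Fin m) (Fin n) ℝ) (b : Fin m → ℝ)
    (P : Matrix (Fin q) (Fin n) ℝ) (Z : Matrix (Fin q) (Fin r) ℝ)
    (hker : ∀ y : Fin q → ℝ, Z.transpose.mulVec y = 0 → y = 0)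
    (C : Set (Fin q → ℝ)) (hC : C = {y | ∀ j, 0 ≤ Z.transpose.mulVec y j})
    (S : Set (Fin n → ℝ)) (hS : S = {x | ∀ i, b i ≤ A.mulVec x i})
    (hSne : S.Nonempty)
    (UI : Set (Fin q → ℝ)) (hUI : UI = (P.mulVec '' S) + C)
    (L : Set (Fin q → ℝ)) (hL : L = recCone UI ∩ (-recCone UI))
    (hLC : L ∩ C = {0})
    (Xpoi Xdir : Set ((Fin n → ℝ) × (Fin q → ℝ)))
    (hirr : IsIrredundantPPSolution A b P Z UI Xpoi Xdir) :
    (∀ s ∈ Xdir, s.2 ∉ L + (C \ {0}) → s.2 ∉ recCone UI + (C \ {0})) ∧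
    IsVLPSolution A b P C (Prod.fst '' Xpoi)
      {x | ∃ y, (x, y) ∈ Xdir ∧ y ∉ L + (C \ {0})} := by
  classical
  obtain ⟨hPP, hminimal⟩ := hirr
  obtain ⟨hXpoiFin, hXdirFin, hXpoiNe, hpoiFeas, hdirFeas, hUIeq⟩ := hPP
  set Qp : Set (Fin q → ℝ) := Prod.snd '' Xpoi with hQp
  set D : Set (Fin q → ℝ) := Prod.snd '' Xdir with hD
  have hQpFin : Qp.Finite := hXpoiFin.image _
  have hQpNe : Qp.Nonempty := hXpoiNe.image _
  have hDFin : D.Finite := hXdirFin.image _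
  set sD : Finset (Fin q → ℝ) := hDFin.toFinset with hsDdef
  have hsD : (↑sD : Set (Fin q → ℝ)) = D := hDFin.coe_toFinset
  set sQ : Finset (Fin q → ℝ) := hQpFin.toFinset with hsQdef
  have hsQ : (↑sQ : Set (Fin q → ℝ)) = Qp := hQpFin.coe_toFinset
  -- basic C facts
  have hCmem : ∀ y : Fin q → ℝ, y ∈ C ↔ ∀ j, 0 ≤ Z.transpose.mulVec y j := by
    intro y; rw [hC]; rfl
  have hC0 : (0 : Fin q → ℝ) ∈ C := by
    rw [hCmem]; intro j; rw [Matrix.mulVec_zero]; exact le_refl 0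
  have hCadd : ∀ c1 ∈ C, ∀ c2 ∈ C, c1 + c2 ∈ C := by
    intro c1 h1 c2 h2
    rw [hCmem] at h1 h2 ⊢
    intro j
    rw [Matrix.mulVec_add]
    exact add_nonneg (h1 j) (h2 j)
  have hCsmul : ∀ a : ℝ, 0 ≤ a → ∀ c ∈ C, a • c ∈ C := by
    intro a ha c hc
    rw [hCmem] at hc ⊢
    intro j
    rw [Matrix.mulVec_smul]
    exact mul_nonneg ha (hc j)
  have hCconv : Convex ℝ C := by
    intro c1 h1 c2 h2 a b ha hb _
    exact hCadd _ (hCsmul a ha c1 h1) _ (hCsmul b hb c2 h2)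
  have hCpointed : ∀ c ∈ C, -c ∈ C → c = 0 := by
    intro c hc hnc
    rw [hCmem] at hc hnc
    apply hker
    funext j
    have := hnc j
    rw [Matrix.mulVec_neg] at this
    have h2 := hc j
    have : Z.transpose.mulVec c j ≤ 0 := by
      have := this; simp only [Pi.neg_apply] at this; linarith
    exact le_antisymm this h2
  -- convexity of UI
  have hUIconv : Convex ℝ UI := by
    rw [hUIeq]
    exact (convex_convexHull ℝ Qp).add convex_coneOf
  -- C and D inside the recession cone
  have hC_recC : C ⊆ recCone UI := by
    intro c hc u hu
    rw [hUI] at hu ⊢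
    obtain ⟨pz, hpz, c0, hc0, rfl⟩ := hu
    exact ⟨pz, hpz, c0 + c, hCadd _ hc0 _ hc, by rw [add_assoc]⟩
  have hD_recC : D ⊆ recCone UI := by
    intro y hy u hu
    rw [hUIeq] at hu ⊢
    obtain ⟨p, hp, k, hk, rfl⟩ := hu
    exact ⟨p, hp, k + y, add_mem_coneOf hk (subset_coneOf hy), by rw [add_assoc]⟩
  have hrec0 : (0 : Fin q → ℝ) ∈ recCone UI := zero_mem_recCone
  have hrecsmul : ∀ a : ℝ, 0 ≤ a → ∀ d ∈ recCone UI, a • d ∈ recCone UI :=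
    fun a ha d hd => smul_mem_recCone hUIconv ha hd
  have hrecconv : Convex ℝ (recCone UI) := by
    intro d1 h1 d2 h2 a b ha hb _
    exact add_mem_recCone (hrecsmul a ha d1 h1) (hrecsmul b hb d2 h2)
  have hconeRec : coneOf (recCone UI) ⊆ recCone UI :=
    coneOf_subset_self hrecconv hrec0 hrecsmul
  have hconeD_rec : coneOf D ⊆ recCone UI :=
    (coneOf_mono hD_recC).trans hconeRec
  have hrec_coneD : recCone UI ⊆ coneOf D := by
    rw [← hsD]
    exact recCone_subset_coneOf hQpFin hQpNe (by rw [hUIeq, hsD])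
  have hC_coneD : C ⊆ coneOf D := fun c hc => hrec_coneD (hC_recC hc)
  -- L facts
  have hLmem : ∀ l : Fin q → ℝ, l ∈ L ↔ l ∈ recCone UI ∧ -l ∈ recCone UI := by
    intro l
    rw [hL, Set.mem_inter_iff, Set.mem_neg]
  have hL0 : (0 : Fin q → ℝ) ∈ L := by
    rw [hLmem]; exact ⟨hrec0, by simpa using hrec0⟩
  have hLadd : ∀ a ∈ L, ∀ b ∈ L, a + b ∈ L := by
    intro a ha b hb
    rw [hLmem] at ha hb ⊢
    refine ⟨add_mem_recCone ha.1 hb.1, ?_⟩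
    rw [neg_add]
    exact add_mem_recCone ha.2 hb.2
  have hLneg : ∀ a ∈ L, -a ∈ L := by
    intro a ha
    rw [hLmem] at ha ⊢
    exact ⟨ha.2, by simpa using ha.1⟩
  have hLsmul : ∀ c : ℝ, 0 ≤ c → ∀ a ∈ L, c • a ∈ L := by
    intro c hc a ha
    rw [hLmem] at ha ⊢
    exact ⟨hrecsmul c hc a ha.1, by rw [← smul_neg]; exact hrecsmul c hc _ ha.2⟩
  have hLdisj : ∀ c, c ∈ L → c ∈ C → c = 0 := by
    intro c h1 h2
    have : c ∈ L ∩ C := ⟨h1, h2⟩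
    rw [hLC] at this
    exact this
  have hmemCd : ∀ c : Fin q → ℝ, c ∈ C \ ({0} : Set (Fin q → ℝ)) ↔ c ∈ C ∧ c ≠ 0 := by
    intro c
    simp [Set.mem_diff]
  -- feasibility consequences
  have hpoiC : ∀ s ∈ Xpoi, s.2 - P.mulVec s.1 ∈ C := by
    intro s hs
    rw [hCmem]
    intro j
    rw [Matrix.mulVec_sub, Pi.sub_apply, sub_nonneg]
    exact (hpoiFeas s hs).2 j
  have hdirC : ∀ s ∈ Xdir, s.2 - P.mulVec s.1 ∈ C := by
    intro s hs
    rw [hCmem]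
    intro j
    rw [Matrix.mulVec_sub, Pi.sub_apply, sub_nonneg]
    exact (hdirFeas s hs).2.2 j
  have hhom_rec : ∀ x : Fin n → ℝ, (∀ i, (0:ℝ) ≤ A.mulVec x i) → P.mulVec x ∈ recCone UI := by
    intro x hx u hu
    rw [hUI] at hu ⊢
    obtain ⟨pw, ⟨w, hw, rfl⟩, c0, hc0, rfl⟩ := hu
    refine ⟨P.mulVec (w + x), ⟨w + x, ?_, rfl⟩, c0, hc0, ?_⟩
    · rw [hS] at hw ⊢
      intro i
      rw [Matrix.mulVec_add, Pi.add_apply]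
      have := hw i
      have := hx i
      linarith
    · rw [Matrix.mulVec_add]
      exact add_right_comm _ _ _
  -- Part (a)
  have partA : ∀ s ∈ Xdir, s.2 ∉ L + (C \ {0}) → s.2 ∉ recCone UI + (C \ {0}) := by
    rintro ⟨x, y⟩ hmemXdir hyL hyRec
    obtain ⟨dd, hdd, c, hcmem, hsum0⟩ := mem_add.mp hyRec
    have hsum : dd + c = y := hsum0
    obtain ⟨hcC, hcne⟩ := (hmemCd c).mp hcmem
    have hyD : y ∈ D := ⟨(x, y), hmemXdir, rfl⟩
    have hdd' : dd ∈ coneOf (↑sD : Set (Fin q → ℝ)) := by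
      rw [hsD]; exact hrec_coneD hdd
    have hcD : c ∈ coneOf (↑sD : Set (Fin q → ℝ)) := by
      rw [hsD]; exact hC_coneD hcC
    obtain ⟨lam, hlam, d₁, hd₁, hdddec⟩ := coneOf_split y hdd'
    obtain ⟨mu, hmu, c₁, hc₁, hcdec⟩ := coneOf_split y hcD
    rw [hsD] at hd₁ hc₁
    have hyL' : y ∉ L + (C \ {0}) := hyL
    have h1 : lam • y + d₁ + (mu • y + c₁) = y := by rw [← hdddec, ← hcdec]; exact hsum
    have hyrep : (1 - (lam + mu)) • y = d₁ + c₁ := by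
      rw [sub_smul, one_smul, sub_eq_iff_eq_add, add_smul]
      calc y = lam • y + d₁ + (mu • y + c₁) := h1.symm
        _ = d₁ + c₁ + (lam • y + mu • y) := by abel
    have hd₁rec : d₁ ∈ recCone UI := hconeD_rec (coneOf_mono Set.diff_subset hd₁)
    have hc₁rec : c₁ ∈ recCone UI := hconeD_rec (coneOf_mono Set.diff_subset hc₁)
    rcases lt_trichotomy (lam + mu) 1 with hnu | hnu | hnu
    · -- removal case
      have h1nu : (0:ℝ) < 1 - (lam + mu) := by linarith
      have hrem : y ∈ coneOf (D \ {y}) := by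
        have hmem := smul_mem_coneOf (c := (1 - (lam + mu))⁻¹)
          (inv_nonneg.mpr (le_of_lt h1nu)) (add_mem_coneOf hd₁ hc₁)
        have hyeq : (1 - (lam + mu))⁻¹ • (d₁ + c₁) = y := by
          rw [← hyrep, smul_smul, inv_mul_cancel₀ (ne_of_gt h1nu), one_smul]
        rwa [hyeq] at hmem
      have hsubcone : coneOf D ⊆ coneOf (D \ {y}) := by
        intro z hz
        rw [← hsD] at hz
        obtain ⟨l, hl, z', hz', rfl⟩ := coneOf_split y hz
        rw [hsD] at hz'
        exact add_mem_coneOf (smul_mem_coneOf hl hrem) hz'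
      set Xdir' := Xdir \ {(x, y)} with hXdir'
      have hD'sub : D \ {y} ⊆ Prod.snd '' Xdir' := by
        rintro y' ⟨⟨s', hs', rfl⟩, hy'ne⟩
        refine ⟨s', ⟨hs', ?_⟩, rfl⟩
        intro hcon
        rw [Set.mem_singleton_iff] at hcon
        apply hy'ne
        rw [hcon]
        exact rfl
      have hD'sup : Prod.snd '' Xdir' ⊆ D := Set.image_mono Set.diff_subset
      have hconeeq : coneOf (Prod.snd '' Xdir') = coneOf D :=
        Set.Subset.antisymm (coneOf_mono hD'sup) (hsubcone.trans (coneOf_mono hD'sub))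
      have hPP' : IsPPSolution A b P Z UI Xpoi Xdir' :=
        ⟨hXpoiFin, hXdirFin.subset Set.diff_subset, hXpoiNe, hpoiFeas,
          fun s hs => hdirFeas s hs.1, by rw [hUIeq, hconeeq]⟩
      have heq := (hminimal Xpoi Xdir' (subset_refl _) Set.diff_subset hPP').2
      have : (x, y) ∈ Xdir' := by rw [heq]; exact hmemXdir
      exact this.2 rfl
    · -- lam + mu = 1
      have he0 : d₁ + c₁ = 0 := by
        rw [← hyrep, hnu]; simp
      have hc₁d₁ : c₁ = -d₁ := (neg_eq_of_add_eq_zero_right he0).symm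
      have hd₁L : d₁ ∈ L := by
        rw [hLmem]
        refine ⟨hd₁rec, ?_⟩
        rwa [hc₁d₁] at hc₁rec
      rcases eq_or_lt_of_le hmu with hmu0 | hmupos
      · -- mu = 0 : c = c₁, c ∈ L ∩ C
        have hcc₁ : c = c₁ := by rw [hcdec, ← hmu0]; simp
        have hcL : c ∈ L := by
          rw [hLmem]
          refine ⟨hC_recC hcC, ?_⟩
          rw [hcc₁, hc₁d₁, neg_neg]
          exact hd₁rec
        exact hcne (hLdisj c hcL hcC)
      · -- mu > 0
        apply hyL'
        have hmune : mu ≠ 0 := ne_of_gt hmupos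
        have h2 : c + d₁ = mu • y := by
          calc c + d₁ = mu • y + (d₁ + c₁) := by rw [hcdec]; abel
            _ = mu • y := by rw [he0, add_zero]
        have h3 : mu⁻¹ • (c + d₁) = y := by
          rw [h2, smul_smul, inv_mul_cancel₀ hmune, one_smul]
        refine ⟨mu⁻¹ • d₁, hLsmul _ (inv_nonneg.mpr hmu) _ hd₁L, mu⁻¹ • c,
          (hmemCd _).mpr ⟨hCsmul _ (inv_nonneg.mpr hmu) _ hcC,
            smul_ne_zero (inv_ne_zero hmune) hcne⟩, ?_⟩
        rw [← h3, smul_add]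
        abel
    · -- lam + mu > 1
      apply hyL'
      have hnegy : -y ∈ recCone UI := by
        have hne : (lam + mu) - 1 ≠ 0 := by linarith
        have h1' : ((lam + mu) - 1)⁻¹ • (d₁ + c₁) = -y := by
          rw [← hyrep, smul_smul]
          rw [show ((lam + mu) - 1)⁻¹ * (1 - (lam + mu)) = -1 by field_simp; ring]
          module
        rw [← h1']
        exact hrecsmul _ (inv_nonneg.mpr (by linarith)) _ (add_mem_recCone hd₁rec hc₁rec)
      have hddL : dd ∈ L := by
        rw [hLmem]
        refine ⟨hdd, ?_⟩
        have : -dd = c + (-y) := by rw [← hsum]; abel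
        rw [this]
        exact add_mem_recCone (hC_recC hcC) hnegy
      exact ⟨dd, hddL, c, hcmem, hsum⟩
  -- convexity of P '' S and feasibility images
  have hPSconv : Convex ℝ (P.mulVec '' S) := by
    rintro _ ⟨z1, hz1, rfl⟩ _ ⟨z2, hz2, rfl⟩ a bb ha hb hab
    refine ⟨a • z1 + bb • z2, ?_, ?_⟩
    · rw [hS] at hz1 hz2 ⊢
      intro i
      rw [Matrix.mulVec_add, Matrix.mulVec_smul, Matrix.mulVec_smul]
      simp only [Pi.add_apply, Pi.smul_apply, smul_eq_mul]
      have h1 := mul_le_mul_of_nonneg_left (hz1 i) ha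
      have h2 := mul_le_mul_of_nonneg_left (hz2 i) hb
      have h3 : a * b i + bb * b i = b i := by rw [← add_mul, hab, one_mul]
      linarith
    · rw [Matrix.mulVec_add, Matrix.mulVec_smul, Matrix.mulVec_smul]
  -- E2 : elements of L are never excluded
  have hkept : ∀ y' ∈ L, y' ∉ L + (C \ {0}) := by
    intro y' hy' hcon
    obtain ⟨l, hl, c, hc, hsum⟩ := mem_add.mp hcon
    obtain ⟨hcC, hcne⟩ := (hmemCd c).mp hc
    apply hcne
    apply hLdisj c ?_ hcC
    have : c = y' + (-l) := by rw [← hsum]; abel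
    rw [this]
    exact hLadd _ hy' _ (hLneg _ hl)
  -- E1 : L is generated by directions lying in L
  have hL_coneDL : L ⊆ coneOf (D ∩ L) := by
    intro l hl
    have hlD : l ∈ coneOf (↑sD : Set (Fin q → ℝ)) := by
      rw [hsD]; exact hrec_coneD ((hLmem l).mp hl).1
    obtain ⟨w, hw, hleq⟩ := mem_coneOf_finset.mp hlD
    have hkey : ∀ i ∈ sD, w i • i ≠ 0 → i ∈ L := by
      intro i₀ hi₀ hne0
      have hwpos : 0 < w i₀ := lt_of_le_of_ne (hw i₀ hi₀)
        (by intro h; apply hne0; rw [← h, zero_smul])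
      have hi₀D : i₀ ∈ D := by rw [← hsD]; exact hi₀
      have h1 : w i₀ • i₀ ∈ recCone UI := hrecsmul _ (hw i₀ hi₀) _ (hD_recC hi₀D)
      have hsumrec : (∑ i ∈ sD.erase i₀, w i • i) ∈ recCone UI := by
        apply hconeD_rec
        exact sum_mem_coneOf (fun i hi => hw i (Finset.mem_of_mem_erase hi))
          (fun i hi => by rw [← hsD]; exact Finset.mem_coe.mpr (Finset.mem_of_mem_erase hi))
      have h2 : -(w i₀ • i₀) ∈ recCone UI := by
        have heq2 : -(w i₀ • i₀) = (∑ i ∈ sD.erase i₀, w i • i) + (-l) := by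
          rw [hleq, ← Finset.add_sum_erase sD (fun i => w i • i) hi₀]
          abel
        rw [heq2]
        exact add_mem_recCone hsumrec ((hLmem l).mp hl).2
      have hwL : w i₀ • i₀ ∈ L := (hLmem _).mpr ⟨h1, h2⟩
      have h3 : (w i₀)⁻¹ • (w i₀ • i₀) ∈ L :=
        hLsmul _ (inv_nonneg.mpr (le_of_lt hwpos)) _ hwL
      rwa [smul_smul, inv_mul_cancel₀ (ne_of_gt hwpos), one_smul] at h3
    have hfilter : l = ∑ i ∈ sD.filter (fun i => i ∈ L), w i • i := by
      rw [hleq]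
      exact (Finset.sum_filter_of_ne hkey).symm
    rw [hfilter]
    exact sum_mem_coneOf (fun i hi => hw i (Finset.mem_filter.mp hi).1)
      (fun i hi => ⟨by rw [← hsD]; exact Finset.mem_coe.mpr (Finset.mem_filter.mp hi).1,
        (Finset.mem_filter.mp hi).2⟩)
  set Sdir : Set (Fin n → ℝ) := {x | ∃ y, (x, y) ∈ Xdir ∧ y ∉ L + (C \ {0})} with hSdir
  -- directions in D ∩ L come from Sdir
  have hDL_sub : D ∩ L ⊆ (P.mulVec '' Sdir) + C := by
    rintro y' ⟨hy'D, hy'L⟩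
    obtain ⟨s', hs', rfl⟩ := hy'D
    refine ⟨P.mulVec s'.1, ⟨s'.1, ⟨s'.2, hs', hkept _ hy'L⟩, rfl⟩,
      s'.2 - P.mulVec s'.1, hdirC _ hs', by module⟩
  -- all of D sits inside coneOf (P '' Sdir) + C
  have hDsub : D ⊆ coneOf (P.mulVec '' Sdir) + C := by
    intro y' hy'D
    by_cases hy'L : y' ∈ L + (C \ {0})
    · obtain ⟨l, hlL, c, hc, hsum⟩ := mem_add.mp hy'L
      have hlmem : l ∈ coneOf (P.mulVec '' Sdir) + C :=
        (coneOf_subset_add hDL_sub hCconv hC0 hCsmul) (hL_coneDL hlL)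
      obtain ⟨k1, hk1, c1, hc1, hsum1⟩ := mem_add.mp hlmem
      exact ⟨k1, hk1, c1 + c, hCadd _ hc1 _ ((hmemCd c).mp hc).1,
        by rw [← hsum, ← hsum1]; abel⟩
    · obtain ⟨s', hs', rfl⟩ := hy'D
      exact ⟨P.mulVec s'.1, subset_coneOf ⟨s'.1, ⟨s'.2, hs', hy'L⟩, rfl⟩,
        s'.2 - P.mulVec s'.1, hdirC _ hs', by module⟩
  have hconeSelf : coneOf (coneOf (P.mulVec '' Sdir)) ⊆ coneOf (P.mulVec '' Sdir) :=
    coneOf_subset_self convex_coneOf zero_mem_coneOf (fun c hc x hx => smul_mem_coneOf hc hx)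
  have hconeDsub : coneOf D ⊆ coneOf (P.mulVec '' Sdir) + C := by
    intro k hk
    obtain ⟨k1, hk1, c1, hc1, rfl⟩ :=
      mem_add.mp ((coneOf_subset_add hDsub hCconv hC0 hCsmul) hk)
    exact ⟨k1, hconeSelf hk1, c1, hc1, rfl⟩
  have hQpsub : Qp ⊆ (P.mulVec '' (Prod.fst '' Xpoi)) + C := by
    rintro _ ⟨s', hs', rfl⟩
    exact ⟨P.mulVec s'.1, ⟨s'.1, ⟨s', hs', rfl⟩, rfl⟩,
      s'.2 - P.mulVec s'.1, hpoiC _ hs', by module⟩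
  have hQpconv : convexHull ℝ Qp ⊆ convexHull ℝ (P.mulVec '' (Prod.fst '' Xpoi)) + C :=
    convexHull_subset_add hQpsub hCconv
  have hSdirRec : coneOf (P.mulVec '' Sdir) ⊆ recCone UI := by
    refine (coneOf_mono ?_).trans hconeRec
    rintro _ ⟨x, ⟨y, hxy, _⟩, rfl⟩
    exact hhom_rec x (hdirFeas _ hxy).2.1
  refine ⟨partA, hXpoiFin.image _, ?_, hXpoiNe.image _, ?_, ?_, ?_, ?_, ?_⟩
  · -- Sdir finite
    exact (hXdirFin.image Prod.fst).subset (by rintro x ⟨y, hxy, _⟩; exact ⟨(x, y), hxy, rfl⟩)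
  · -- feasibility of Spoi
    rintro x ⟨s, hs, rfl⟩ i
    exact (hpoiFeas s hs).1 i
  · -- feasibility of Sdir
    rintro x ⟨y, hxy, hyL⟩
    refine ⟨?_, (hdirFeas _ hxy).2.1⟩
    intro hx0
    have hne := (hdirFeas _ hxy).1
    have hyC : y ∈ C := by
      rw [hCmem]
      intro j
      have h1 := (hdirFeas _ hxy).2.2 j
      rw [show (x, y).1 = x from rfl, hx0, Matrix.mulVec_zero, Matrix.mulVec_zero] at h1
      simpa using h1
    have hyne : y ≠ 0 := by
      intro h
      apply hne
      rw [Prod.ext_iff]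
      exact ⟨hx0, h⟩
    exact hyL ⟨0, hL0, y, (hmemCd y).mpr ⟨hyC, hyne⟩, by simp⟩
  · -- minimality of Spoi points
    rintro x₀ ⟨⟨x₀', y₀⟩, hpoi, rfl⟩
    rw [← hS]
    intro hcon
    obtain ⟨pz, ⟨z, hz, rfl⟩, c, hcmem, hsumc0⟩ := mem_add.mp hcon
    have hsumc : P.mulVec z + c = P.mulVec x₀' := hsumc0
    obtain ⟨hcC, hcne⟩ := (hmemCd c).mp hcmem
    have hc0F : y₀ - P.mulVec x₀' ∈ C := hpoiC _ hpoi
    set c2 : Fin q → ℝ := c + (y₀ - P.mulVec x₀') with hc2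
    have hc2C : c2 ∈ C := hCadd _ hcC _ hc0F
    have hc2ne : c2 ≠ 0 := by
      intro h
      apply hcne
      apply hCpointed c hcC
      have h2 : -c = y₀ - P.mulVec x₀' := neg_eq_of_add_eq_zero_right h
      rw [h2]
      exact hc0F
    have hy₀eq : y₀ = P.mulVec z + c2 := by
      calc y₀ = (P.mulVec z + c) + (y₀ - P.mulVec x₀') := by rw [hsumc]; abel
        _ = P.mulVec z + c2 := by rw [hc2]; abel
    have hPzUI : P.mulVec z ∈ UI := by
      rw [hUI]
      exact ⟨P.mulVec z, ⟨z, hz, rfl⟩, 0, hC0, add_zero _⟩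
    obtain ⟨p, hp, k, hk, hpk⟩ := mem_add.mp (hUIeq ▸ hPzUI)
    have hy₀rep : y₀ = p + (k + c2) := by
      rw [hy₀eq, ← hpk]
      abel
    have hk2 : k + c2 ∈ coneOf D := add_mem_coneOf hk (hC_coneD hc2C)
    have hpQ : p ∈ convexHull ℝ (↑sQ : Set (Fin q → ℝ)) := by rw [hsQ]; exact hp
    rcases convexHull_split y₀ hpQ with hpy | ⟨t, ht0, ht1, p', hp', hpdec⟩
    · -- p = y₀ forces c2 degenerate
      have h' : y₀ + 0 = y₀ + (k + c2) := by
        rw [add_zero]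
        rw [hpy] at hy₀rep
        exact hy₀rep
      have h0 : k + c2 = 0 := (add_left_cancel h').symm
      have hc2L : c2 ∈ L := by
        rw [hLmem]
        refine ⟨hC_recC hc2C, ?_⟩
        rw [neg_eq_of_add_eq_zero_left h0]
        exact hconeD_rec hk
      exact hc2ne (hLdisj _ hc2L hc2C)
    · rw [hsQ] at hp'
      have h1t : (0:ℝ) < 1 - t := by linarith
      have hremY : y₀ ∈ convexHull ℝ (Qp \ {y₀}) + coneOf D := by
        have hthis : y₀ = t • y₀ + (1 - t) • p' + (k + c2) := by
          conv_lhs => rw [hy₀rep, hpdec]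
        have hkey : (1 - t) • y₀ = (1 - t) • p' + (k + c2) := by
          rw [sub_smul, one_smul, sub_eq_iff_eq_add]
          calc y₀ = t • y₀ + (1 - t) • p' + (k + c2) := hthis
            _ = (1 - t) • p' + (k + c2) + t • y₀ := by abel
        have h4 : (1 - t)⁻¹ • ((1 - t) • p' + (k + c2)) = y₀ := by
          rw [← hkey, smul_smul, inv_mul_cancel₀ (ne_of_gt h1t), one_smul]
        refine ⟨p', hp', (1 - t)⁻¹ • (k + c2),
          smul_mem_coneOf (inv_nonneg.mpr (le_of_lt h1t)) hk2, ?_⟩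
        show p' + (1 - t)⁻¹ • (k + c2) = y₀
        rw [← h4]
        rw [smul_add ((1 - t)⁻¹) ((1 - t) • p') (k + c2), smul_smul,
          inv_mul_cancel₀ (ne_of_gt h1t), one_smul]
      obtain ⟨p'', hp'', kk, hkk, hy3⟩ := mem_add.mp hremY
      have hQpne' : (Qp \ {y₀}).Nonempty := by
        by_contra h
        rw [Set.not_nonempty_iff_eq_empty] at h
        rw [h, convexHull_empty] at hp''
        exact hp''
      have hsubQ : convexHull ℝ Qp ⊆ convexHull ℝ (Qp \ {y₀}) + coneOf D := by
        intro pp hpp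
        rw [← hsQ] at hpp
        rcases convexHull_split y₀ hpp with hppy | ⟨ss, hs0, hs1, pp', hpp', hppdec⟩
        · rw [hppy]
          exact hremY
        · rw [hsQ] at hpp'
          refine ⟨ss • p'' + (1 - ss) • pp',
            (convex_convexHull ℝ _) hp'' hpp' hs0 (by linarith) (by ring),
            ss • kk, smul_mem_coneOf hs0 hkk, ?_⟩
          rw [hppdec, ← hy3, smul_add]
          abel
      set Xpoi' := Xpoi \ {((x₀', y₀) : (Fin n → ℝ) × (Fin q → ℝ))} with hXpoi'
      have hQ'sub : Qp \ {y₀} ⊆ Prod.snd '' Xpoi' := by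
        rintro y' ⟨⟨s', hs', rfl⟩, hy'ne⟩
        refine ⟨s', ⟨hs', ?_⟩, rfl⟩
        intro hcon2
        rw [Set.mem_singleton_iff] at hcon2
        apply hy'ne
        rw [hcon2]
        exact rfl
      have hQ'sup : Prod.snd '' Xpoi' ⊆ Qp := Set.image_mono Set.diff_subset
      have hXpoi'ne : Xpoi'.Nonempty := by
        obtain ⟨y', hy'⟩ := hQpne'
        obtain ⟨s', hs', hseq⟩ := hy'.1
        refine ⟨s', hs', ?_⟩
        intro hcon2
        rw [Set.mem_singleton_iff] at hcon2
        apply hy'.2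
        rw [Set.mem_singleton_iff, ← hseq, hcon2]
      have hUIeq' : UI = convexHull ℝ (Prod.snd '' Xpoi') + coneOf D := by
        apply Set.Subset.antisymm
        · rw [hUIeq]
          intro u hu
          obtain ⟨pp, hpp, k', hk', rfl⟩ := mem_add.mp hu
          obtain ⟨pa, hpa, ka, hka, hpaka⟩ := mem_add.mp (hsubQ hpp)
          exact ⟨pa, convexHull_mono hQ'sub hpa, ka + k', add_mem_coneOf hka hk',
            by rw [← hpaka]; abel⟩
        · rw [hUIeq]
          intro u hu
          obtain ⟨pp, hpp, k', hk', rfl⟩ := mem_add.mp hu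
          exact ⟨pp, convexHull_mono hQ'sup hpp, k', hk', rfl⟩
      have hPP' : IsPPSolution A b P Z UI Xpoi' Xdir :=
        ⟨hXpoiFin.subset Set.diff_subset, hXdirFin, hXpoi'ne,
          fun s hs => hpoiFeas s hs.1, hdirFeas, hUIeq'⟩
      have heq := (hminimal Xpoi' Xdir Set.diff_subset (subset_refl _) hPP').1
      have hmem' : ((x₀', y₀) : (Fin n → ℝ) × (Fin q → ℝ)) ∈ Xpoi' := by
        rw [heq]; exact hpoi
      exact hmem'.2 rfl
  · -- minimality of Sdir directions
    rintro x ⟨y, hxy, hyL⟩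
    intro hcon
    obtain ⟨pz, ⟨z, hz, rfl⟩, c, hcmem, hsumc0⟩ := mem_add.mp hcon
    have hsumc : P.mulVec z + c = P.mulVec x := hsumc0
    obtain ⟨hcC, hcne⟩ := (hmemCd c).mp hcmem
    have hPzrec : P.mulVec z ∈ recCone UI := hhom_rec z hz
    have hcyF : y - P.mulVec x ∈ C := hdirC _ hxy
    set c2 : Fin q → ℝ := c + (y - P.mulVec x) with hc2
    have hc2C : c2 ∈ C := hCadd _ hcC _ hcyF
    have hc2ne : c2 ≠ 0 := by
      intro h
      apply hcne
      apply hCpointed c hcC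
      have h2 : -c = y - P.mulVec x := neg_eq_of_add_eq_zero_right h
      rw [h2]
      exact hcyF
    have hyrep : P.mulVec z + c2 = y := by
      calc P.mulVec z + c2 = (P.mulVec z + c) + (y - P.mulVec x) := by rw [hc2]; abel
        _ = y := by rw [hsumc]; abel
    exact partA (x, y) hxy hyL ⟨P.mulVec z, hPzrec, c2, (hmemCd _).mpr ⟨hc2C, hc2ne⟩, hyrep⟩
  · -- finite infimizer property
    rw [← hS]
    apply Set.Subset.antisymm
    · intro u hu
      obtain ⟨v, hv, c, hcC, rfl⟩ := mem_add.mp hu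
      obtain ⟨p, hp, k, hk, rfl⟩ := mem_add.mp hv
      have hpPS : p ∈ P.mulVec '' S := by
        refine convexHull_min ?_ hPSconv hp
        rintro _ ⟨x, ⟨s', hs', rfl⟩, rfl⟩
        exact ⟨s'.1, by rw [hS]; exact fun i => (hpoiFeas s' hs').1 i, rfl⟩
      have hkrec : k ∈ recCone UI := hSdirRec hk
      have hpc : p + c ∈ UI := by
        rw [hUI]
        exact ⟨p, hpPS, c, hcC, rfl⟩
      have h3 : p + c + k ∈ UI := hkrec _ hpc
      rw [hUI] at h3
      rw [show p + k + c = p + c + k from by abel]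
      exact h3
    · intro u hu
      obtain ⟨pz0, ⟨z, hz, rfl⟩, c, hcC, rfl⟩ := mem_add.mp hu
      have hPzUI : P.mulVec z ∈ UI := by
        rw [hUI]
        exact ⟨P.mulVec z, ⟨z, hz, rfl⟩, 0, hC0, add_zero _⟩
      obtain ⟨p, hp, k, hk, hpk⟩ := mem_add.mp (hUIeq ▸ hPzUI)
      obtain ⟨p1, hp1, c1, hc1, hpc1⟩ := mem_add.mp (hQpconv hp)
      obtain ⟨k1, hk1, c2, hc2, hkc2⟩ := mem_add.mp (hconeDsub hk)
      refine ⟨p1 + k1, ⟨p1, hp1, k1, hk1, rfl⟩, c1 + (c2 + c),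
        hCadd _ hc1 _ (hCadd _ hc2 _ hcC), ?_⟩
      rw [← hpk, ← hpc1, ← hkc2]
      abel
end

section
/- Let K ⊆ ℝ^q be a polyhedral cone with K = cone B for a finite set B ⊆ ℝ^q\{0}, and let C ⊆ K be a convex cone with (K ∩ −K) ∩ C = {0}. Suppose y ∈ B satisfies y = z + c with z ∈ K, c ∈ C\{0}, and y ∉ (K ∩ −K) + C\{0}. Then y ∈ cone(B\{y}). -/
open Pointwise Set

lemma mem_coneOf_iff {q : ℕ} (B : Finset (Fin q → ℝ)) (x : Fin q → ℝ) :
    x ∈ coneOf (B : Set (Fin q → ℝ)) ↔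
      ∃ f : (Fin q → ℝ) → ℝ, (∀ b ∈ B, 0 ≤ f b) ∧ x = ∑ b ∈ B, f b • b := by
  constructor
  · rintro (rfl | ⟨l, hl, b, hb, rfl⟩)
    · exact ⟨0, fun _ _ => le_rfl, by simp⟩
    · rw [Finset.convexHull_eq] at hb
      obtain ⟨w, hw0, hw1, hwc⟩ := hb
      refine ⟨fun v => l * w v, fun v hv => mul_nonneg hl (hw0 v hv), ?_⟩
      rw [← hwc, Finset.centerMass_eq_of_sum_1 _ _ hw1, Finset.smul_sum]
      simp [smul_smul]
  · rintro ⟨f, hf, rfl⟩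
    rcases eq_or_lt_of_le (Finset.sum_nonneg hf) with hs | hs
    · left
      have : ∀ b ∈ B, f b = 0 := (Finset.sum_eq_zero_iff_of_nonneg hf).mp hs.symm
      rw [Finset.sum_congr rfl fun b hb => by rw [this b hb, zero_smul]]
      simp
    · right
      refine ⟨∑ b ∈ B, f b, le_of_lt hs, B.centerMass f id, ?_, ?_⟩
      · exact Finset.centerMass_mem_convexHull B hf hs (fun i hi => hi)
      · rw [Finset.centerMass, smul_smul, mul_inv_cancel₀ (ne_of_gt hs), one_smul]
        simp

lemma coneOf_add {q : ℕ} (B : Finset (Fin q → ℝ)) {x y : Fin q → ℝ}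
    (hx : x ∈ coneOf (B : Set (Fin q → ℝ))) (hy : y ∈ coneOf (B : Set (Fin q → ℝ))) :
    x + y ∈ coneOf (B : Set (Fin q → ℝ)) := by
  rw [mem_coneOf_iff] at hx hy ⊢
  obtain ⟨f, hf, rfl⟩ := hx
  obtain ⟨g, hg, rfl⟩ := hy
  exact ⟨f + g, fun b hb => add_nonneg (hf b hb) (hg b hb), by
    rw [← Finset.sum_add_distrib]; simp [add_smul]⟩

lemma coneOf_smul {q : ℕ} (B : Finset (Fin q → ℝ)) {x : Fin q → ℝ} {l : ℝ}
    (hl : 0 ≤ l) (hx : x ∈ coneOf (B : Set (Fin q → ℝ))) :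
    l • x ∈ coneOf (B : Set (Fin q → ℝ)) := by
  rw [mem_coneOf_iff] at hx ⊢
  obtain ⟨f, hf, rfl⟩ := hx
  exact ⟨fun b => l * f b, fun b hb => mul_nonneg hl (hf b hb), by
    rw [Finset.smul_sum]; simp [smul_smul]⟩

lemma mem_coneOf_self {q : ℕ} (B : Finset (Fin q → ℝ)) {y : Fin q → ℝ} (hy : y ∈ B) :
    y ∈ coneOf (B : Set (Fin q → ℝ)) := by
  rw [mem_coneOf_iff]
  refine ⟨fun b => if b = y then 1 else 0, fun b _ => by positivity, ?_⟩
  rw [Finset.sum_congr rfl (fun b _ => by rw [ite_smul, one_smul, zero_smul])]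
  simp [Finset.sum_ite_eq' B y id, hy]

lemma coneOf_erase_subset {q : ℕ} (B : Finset (Fin q → ℝ)) (y : Fin q → ℝ) :
    coneOf ((B : Set (Fin q → ℝ)) \ {y}) ⊆ coneOf (B : Set (Fin q → ℝ)) := by
  intro x hx
  rcases hx with rfl | ⟨l, hl, b, hb, rfl⟩
  · exact Or.inl rfl
  · exact Or.inr ⟨l, hl, b, convexHull_mono (diff_subset) hb, rfl⟩

lemma coneOf_decompose {q : ℕ} (B : Finset (Fin q → ℝ)) {x y : Fin q → ℝ} (hy : y ∈ B)
    (hx : x ∈ coneOf (B : Set (Fin q → ℝ))) :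
    ∃ l : ℝ, 0 ≤ l ∧ ∃ w ∈ coneOf ((B : Set (Fin q → ℝ)) \ {y}), x = l • y + w := by
  rw [mem_coneOf_iff] at hx
  obtain ⟨f, hf, rfl⟩ := hx
  refine ⟨f y, hf y hy, ∑ b ∈ B.erase y, f b • b, ?_, ?_⟩
  · rw [← Finset.coe_erase, mem_coneOf_iff]
    exact ⟨f, fun b hb => hf b (Finset.mem_of_mem_erase hb), rfl⟩
  · rw [← Finset.add_sum_erase B _ hy]

theorem redundant_direction_generator
    (q : ℕ) (B : Finset (Fin q → ℝ)) (hB0 : (0 : Fin q → ℝ) ∉ B)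
    (K : Set (Fin q → ℝ)) (hK : K = coneOf (B : Set (Fin q → ℝ)))
    (C : Set (Fin q → ℝ)) (hCK : C ⊆ K)
    (hCcv : Convex ℝ C) (hCcone : ∀ c ∈ C, ∀ l : ℝ, 0 ≤ l → l • c ∈ C)
    (hLC : (K ∩ (-K)) ∩ C = {0})
    (y : Fin q → ℝ) (hy : y ∈ B)
    (z c : Fin q → ℝ) (hz : z ∈ K) (hc : c ∈ C \ {0}) (hyzc : y = z + c)
    (hyL : y ∉ (K ∩ (-K)) + (C \ {0})) :
    y ∈ coneOf ((B : Set (Fin q → ℝ)) \ {y}) := by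
  subst hK
  have hyK : y ∈ coneOf (B : Set (Fin q → ℝ)) := mem_coneOf_self B hy
  have hcne : c ≠ 0 := fun h => hc.2 (by simp [h])
  -- decompose z
  obtain ⟨l, hl, z₁, hz₁, hzeq⟩ := coneOf_decompose B hy hz
  rcases lt_or_ge l 1 with hl1 | hl1
  · -- l < 1 : y = t • z₁ + t • c
    set t : ℝ := (1 - l)⁻¹ with ht
    have h1l : (0:ℝ) < 1 - l := by linarith
    have htpos : 0 < t := inv_pos.mpr h1l
    have hkey : (1 - l) • y = z₁ + c := by
      rw [hzeq] at hyzc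
      linear_combination (norm := module) hyzc
    have hyeq : y = t • z₁ + t • c := by
      have := congrArg (fun v => t • v) hkey
      simp only [smul_smul, ht, inv_mul_cancel₀ (ne_of_gt h1l), one_smul,
        smul_add] at this
      exact this
    have hz'' : t • z₁ ∈ coneOf ((B : Set (Fin q → ℝ)) \ {y}) := by
      rw [← Finset.coe_erase] at hz₁ ⊢
      exact coneOf_smul _ (le_of_lt htpos) hz₁
    have hc'' : t • c ∈ C := hCcone c hc.1 t (le_of_lt htpos)
    have hc''ne : t • c ≠ 0 := smul_ne_zero (ne_of_gt htpos) hcne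
    -- decompose t • c
    obtain ⟨μ, hμ, w, hw, hweq⟩ := coneOf_decompose B hy (hCK hc'')
    rcases lt_or_ge μ 1 with hμ1 | hμ1
    · -- y = (1-μ)⁻¹ • (t•z₁ + w)
      have h1μ : (0:ℝ) < 1 - μ := by linarith
      have hkey2 : (1 - μ) • y = t • z₁ + w := by
        linear_combination (norm := module) hyeq + hweq
      have : y = (1 - μ)⁻¹ • (t • z₁ + w) := by
        have := congrArg (fun v => (1-μ)⁻¹ • v) hkey2
        simp only [smul_smul, inv_mul_cancel₀ (ne_of_gt h1μ), one_smul] at this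
        exact this
      have hmem : (1 - μ)⁻¹ • (t • z₁ + w) ∈ coneOf ((B : Set (Fin q → ℝ)) \ {y}) := by
        rw [← Finset.coe_erase] at hz'' hw ⊢
        exact coneOf_smul (B.erase y) (le_of_lt (inv_pos.mpr h1μ))
          (coneOf_add (B.erase y) hz'' hw)
      rwa [← this] at hmem
    · -- μ ≥ 1 : contradiction with hyL
      exfalso
      have hnegz : -(t • z₁) = (μ - 1) • y + w := by
        linear_combination (norm := module) hyeq + hweq
      have hnegzK : -(t • z₁) ∈ coneOf (B : Set (Fin q → ℝ)) := by
        rw [hnegz]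
        exact coneOf_add B (coneOf_smul B (by linarith) hyK)
          (coneOf_erase_subset B y hw)
      have hzK : t • z₁ ∈ coneOf (B : Set (Fin q → ℝ)) := coneOf_erase_subset B y hz''
      exact hyL ⟨t • z₁, ⟨hzK, hnegzK⟩, t • c, ⟨hc'', fun h => hc''ne h⟩, hyeq.symm⟩
  · -- l ≥ 1 : contradiction with hLC
    exfalso
    have hnegc : -c = (l - 1) • y + z₁ := by
      rw [hzeq] at hyzc
      linear_combination (norm := module) hyzc
    have hnegcK : -c ∈ coneOf (B : Set (Fin q → ℝ)) := by
      rw [hnegc]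
      exact coneOf_add B (coneOf_smul B (by linarith) hyK) (coneOf_erase_subset B y hz₁)
    have : c ∈ (coneOf (B : Set (Fin q → ℝ)) ∩ (-(coneOf (B : Set (Fin q → ℝ))))) ∩ C :=
      ⟨⟨hCK hc.1, by simpa [Set.mem_neg] using hnegcK⟩, hc.1⟩
    rw [hLC] at this
    exact hcne this
end

section
/- Consider the MOLP: minimize (y, −e^T y) ∈ ℝ^{p+1} over S = {(x,y) : Gx + Hy ≥ h} with ordering cone ℝ^{p+1}_+, where S ≠ ∅. Then the upper image of this MOLP, 𝒫̂ = P[S] + ℝ^{p+1}_+ with P(x,y) = (y, −e^T y), satisfies 𝒫̂ ∩ {z ∈ ℝ^{p+1} : z_1 + ... + z_{p+1} = 0} = P[S]; in particular Y = {y : ∃x, Gx + Hy ≥ h} is recovered by intersecting 𝒫̂ with this hyperplane and dropping the last coordinate. -/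
open Pointwise Set

theorem upper_image_hyperplane_section_recovers_projection
    (k n p : ℕ) (G : Matrix (Fin k) (Fin n) ℝ) (H : Matrix (Fin k) (Fin p) ℝ)
    (h : Fin k → ℝ)
    (S : Set ((Fin n → ℝ) × (Fin p → ℝ)))
    (hS : S = {s | ∀ i, h i ≤ G.mulVec s.1 i + H.mulVec s.2 i})
    (hne : S.Nonempty)
    (P : (Fin n → ℝ) × (Fin p → ℝ) → (Fin (p + 1) → ℝ))
    (hP : P = fun s => Fin.snoc s.2 (-(∑ i, s.2 i)))
    (UI : Set (Fin (p + 1) → ℝ))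
    (hUI : UI = (P '' S) + {z : Fin (p + 1) → ℝ | ∀ j, 0 ≤ z j})
    (Y : Set (Fin p → ℝ))
    (hY : Y = {y | ∃ x : Fin n → ℝ, ∀ i, h i ≤ G.mulVec x i + H.mulVec y i}) :
    UI ∩ {z : Fin (p + 1) → ℝ | ∑ j, z j = 0} = P '' S ∧
    Y = Fin.init '' (UI ∩ {z : Fin (p + 1) → ℝ | ∑ j, z j = 0}) := by
  have hsum : ∀ s : (Fin n → ℝ) × (Fin p → ℝ), ∑ j, P s j = 0 := by
    intro s
    simp [hP, Fin.sum_univ_castSucc]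
  have hmain : UI ∩ {z : Fin (p + 1) → ℝ | ∑ j, z j = 0} = P '' S := by
    ext z
    constructor
    · rintro ⟨hz, hz0⟩
      rw [hUI] at hz
      obtain ⟨a, ⟨s, hsS, rfl⟩, c, hc, rfl⟩ := hz
      have hcsum : ∑ j, c j = 0 := by
        have := hz0
        simp only [Set.mem_setOf_eq, Pi.add_apply, Finset.sum_add_distrib, hsum s] at this
        linarith
      have hc0 : c = 0 := by
        funext j
        have h1 : ∑ j, c j = 0 := hcsum
        have h2 : ∀ j ∈ Finset.univ, (0:ℝ) ≤ c j := fun j _ => hc j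
        have := (Finset.sum_eq_zero_iff_of_nonneg h2).mp h1 j (Finset.mem_univ j)
        simpa using this
      exact ⟨s, hsS, by simp [hc0]⟩
    · rintro ⟨s, hsS, rfl⟩
      refine ⟨?_, hsum s⟩
      rw [hUI]
      exact ⟨P s, ⟨s, hsS, rfl⟩, 0, fun j => le_refl 0, by simp⟩
  refine ⟨hmain, ?_⟩
  rw [hmain, hY]
  ext y
  constructor
  · rintro ⟨x, hx⟩
    refine ⟨P (x, y), ⟨(x, y), ?_, rfl⟩, ?_⟩
    · rw [hS]; exact hx
    · funext i
      simp [hP, Fin.init]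
  · rintro ⟨z, ⟨s, hsS, rfl⟩, rfl⟩
    rw [hS] at hsS
    refine ⟨s.1, ?_⟩
    have : Fin.init (P s) = s.2 := by
      funext i
      simp [hP, Fin.init]
    rw [this]
    exact hsS
end
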